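/- If T ∈ B(X) has Bishop's property (β) at λ₀ and N ∈ B(X) is nilpotent with TN = NT, then T + N has Bishop's property (β) at λ₀. -/

import Mathlib

open Filter Metric Polynomial

noncomputable section

variable {X : Type*} [NormedAddCommGroup X] [NormedSpace ℂ X]

/-- The commutator map `C(R,S)(A) = RA - AS`. -/
def commMap (R S : X →L[ℂ] X) : (X →L[ℂ] X) → (X →L[ℂ] X) := fun A => R ∘L A - A ∘L S

/-- Bishop's property (β) at a point `l0`. -/
def BishopBetaAt (T : X →L[ℂ] X) (l0 : ℂ) : Prop :=
  ∃ v > (0 : ℝ), ∀ U : Set ℂ, IsOpen U → U ⊆ ball l0 v →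
    ∀ f : ℕ → ℂ → X, (∀ n, AnalyticOnNhd ℂ (f n) U) →
      (∀ K ⊆ U, IsCompact K →
        TendstoUniformlyOn (fun n z => T (f n z) - z • f n z) 0 atTop K) →
      ∀ K ⊆ U, IsCompact K → TendstoUniformlyOn (fun n z => f n z) 0 atTop K

lemma tuo_sub0 {F G : ℕ → ℂ → X} {s : Set ℂ}
    (hF : TendstoUniformlyOn F 0 atTop s) (hG : TendstoUniformlyOn G 0 atTop s) :
    TendstoUniformlyOn (fun n z => F n z - G n z) 0 atTop s := by
  rw [Metric.tendstoUniformlyOn_iff] at hF hG ⊢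
  intro ε hε
  filter_upwards [hF (ε / 2) (by linarith), hG (ε / 2) (by linarith)] with n h1 h2 z hz
  have e1 := h1 z hz
  have e2 := h2 z hz
  simp only [Pi.zero_apply, dist_zero_left] at e1 e2 ⊢
  calc ‖F n z - G n z‖ ≤ ‖F n z‖ + ‖G n z‖ := norm_sub_le _ _
    _ < ε / 2 + ε / 2 := add_lt_add e1 e2
    _ = ε := by ring

lemma tuo_clm0 (A : X →L[ℂ] X) {F : ℕ → ℂ → X} {s : Set ℂ}
    (hF : TendstoUniformlyOn F 0 atTop s) :
    TendstoUniformlyOn (fun n z => A (F n z)) 0 atTop s := by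
  have := A.uniformContinuous.comp_tendstoUniformlyOn hF
  exact (by simpa [Function.comp_def] using this :
    TendstoUniformlyOn (fun n z => A (F n z)) (fun _ => 0) atTop s)

theorem stmt7 [CompleteSpace X] (T N : X →L[ℂ] X) (l0 : ℂ)
    (hN : ∃ m : ℕ, 1 ≤ m ∧ N ^ m = 0) (hcomm : T * N = N * T)
    (hT : BishopBetaAt T l0) :
    BishopBetaAt (T + N) l0 := by
  obtain ⟨m, hm, hNm⟩ := hN
  obtain ⟨v, hv, hβ⟩ := hT
  refine ⟨v, hv, ?_⟩
  intro U hU hUv f hf hconv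
  have hcomm' : ∀ k : ℕ, T ∘L (N ^ k) = (N ^ k) ∘L T := by
    intro k
    have : T * N ^ k = N ^ k * T := ((Commute.pow_right hcomm k))
    exact this
  -- step lemma
  have step : ∀ k : ℕ,
      (∀ K ⊆ U, IsCompact K →
        TendstoUniformlyOn (fun n z => (N ^ (k + 1)) (f n z)) 0 atTop K) →
      ∀ K ⊆ U, IsCompact K →
        TendstoUniformlyOn (fun n z => (N ^ k) (f n z)) 0 atTop K := by
    intro k ih
    refine hβ U hU hUv (fun n z => (N ^ k) (f n z)) ?_ ?_
    · intro n
      exact ((N ^ k).analyticOnNhd Set.univ).comp (hf n) (by intro z _; trivial)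
    · intro K hKU hK
      have h1 : TendstoUniformlyOn
          (fun n z => (N ^ k) ((T + N) (f n z) - z • f n z)) 0 atTop K :=
        tuo_clm0 (N ^ k) (hconv K hKU hK)
      have h2 : TendstoUniformlyOn
          (fun n z => (N ^ (k + 1)) (f n z)) 0 atTop K := ih K hKU hK
      have := tuo_sub0 h1 h2
      refine this.congr ?_
      filter_upwards with n
      intro z hz
      have e1 : (N ^ k) (T (f n z)) = T ((N ^ k) (f n z)) := by
        have := congrArg (fun A : X →L[ℂ] X => A (f n z)) (hcomm' k)
        simpa using this.symm
      have e2 : (N ^ (k + 1)) (f n z) = (N ^ k) (N (f n z)) := by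
        rw [pow_succ]
        simp
      simp only [ContinuousLinearMap.add_apply, map_sub, map_add, map_smul, e1, e2]
      abel
  -- downward induction
  have key : ∀ j : ℕ, ∀ K ⊆ U, IsCompact K →
      TendstoUniformlyOn (fun n z => (N ^ (m - j)) (f n z)) 0 atTop K := by
    intro j
    induction j with
    | zero =>
      intro K _ _
      have : (fun (n : ℕ) (z : ℂ) => (N ^ (m - 0)) (f n z)) = 0 := by
        funext n z
        simp [Nat.sub_zero, hNm]
      rw [this]
      rw [Metric.tendstoUniformlyOn_iff]
      intro ε hε
      filter_upwards with n z _
      simpa using hε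
    | succ j ihj =>
      by_cases hjm : j < m
      · have hsub : m - (j + 1) + 1 = m - j := by omega
        refine step (m - (j + 1)) ?_
        rw [hsub]
        exact ihj
      · have : m - (j + 1) = m - j := by omega
        rw [this]
        exact ihj
  intro K hKU hK
  have := key m K hKU hK
  simpa using this
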